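/- Let K ⊂ ℂ be a compact set. Then for every z ∈ ℂ, |(1/π) ∫_K 1/(z - ζ) dA(ζ)| ≤ √(Area(K)/π), where dA denotes two-dimensional Lebesgue measure. -/

import Mathlib

open MeasureTheory

open Set in

lemma AB_superlevel_re (z u : ℂ) (hu : ‖u‖ = 1) {t : ℝ} (ht : 0 < t) :
    volume {ζ : ℂ | t < (u * (z - ζ)⁻¹).re} ≤ ENNReal.ofReal (Real.pi / 4 / t ^ 2) := by
  have hsub : {ζ : ℂ | t < (u * (z - ζ)⁻¹).re} ⊆
      Metric.ball (z - u / (2 * t : ℝ)) ((2 * t)⁻¹) := by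
    intro ζ hζ
    simp only [mem_setOf_eq] at hζ
    set w : ℂ := z - ζ with hw
    have hw0 : w ≠ 0 := by
      intro h
      rw [h] at hζ
      simp at hζ
      exact absurd hζ ht.not_gt
    have hns : 0 < Complex.normSq w := Complex.normSq_pos.mpr hw0
    have hre : (u * w⁻¹).re = (u * (starRingEnd ℂ) w).re * (Complex.normSq w)⁻¹ := by
      rw [Complex.inv_def, ← mul_assoc]
      simp [Complex.mul_re, Complex.ofReal_re, Complex.ofReal_im]
    have hkey : t * Complex.normSq w < (u * (starRingEnd ℂ) w).re := by
      rw [hre, ← div_eq_mul_inv] at hζ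
      exact (lt_div_iff₀ hns).mp hζ
    set c : ℂ := u / (2 * t : ℝ) with hc
    have hdist : ζ - (z - c) = c - w := by rw [hw]; ring
    have hnsc : Complex.normSq c = (2 * t)⁻¹ ^ 2 := by
      rw [hc, Complex.normSq_div, Complex.normSq_ofReal]
      have : Complex.normSq u = 1 := by
        rw [Complex.normSq_eq_norm_sq, hu]; norm_num
      rw [this]
      field_simp
    have hcre : (c * (starRingEnd ℂ) w).re = (u * (starRingEnd ℂ) w).re * (2 * t)⁻¹ := by
      have : c * (starRingEnd ℂ) w = (u * (starRingEnd ℂ) w) * (((2 * t)⁻¹ : ℝ) : ℂ) := by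
        rw [hc]
        push_cast
        field_simp
      rw [this]
      simp [Complex.mul_re]
    have hlt : Complex.normSq (c - w) < (2 * t)⁻¹ ^ 2 := by
      rw [Complex.normSq_sub, hnsc, hcre]
      have h1 : Complex.normSq w < (u * (starRingEnd ℂ) w).re * (2 * t)⁻¹ * 2 := by
        have h2t : (2 * t)⁻¹ * t * 2 = 1 := by field_simp
        nlinarith [hkey, mul_pos ht hns]
      linarith
    rw [Metric.mem_ball, Complex.dist_eq, hdist]
    have habs : ‖c - w‖ ^ 2 < (2 * t)⁻¹ ^ 2 := by
      rwa [Complex.sq_norm]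
    exact lt_of_pow_lt_pow_left₀ 2 (by positivity) habs
  calc volume {ζ : ℂ | t < (u * (z - ζ)⁻¹).re} ≤
      volume (Metric.ball (z - u / (2 * t : ℝ)) ((2 * t)⁻¹)) := measure_mono hsub
    _ = ENNReal.ofReal (Real.pi / 4 / t ^ 2) := by
        rw [Complex.volume_ball]
        rw [← ENNReal.ofReal_pow (by positivity), ← NNReal.coe_real_pi,
          ENNReal.ofReal_coe_nnreal.symm, ← ENNReal.ofReal_mul (by positivity)]
        congr 1
        rw [mul_comm]
        field_simp
        ring_nf

open Set in

lemma AB_superlevel_norm (z : ℂ) {t : ℝ} (ht : 0 < t) :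
    volume {ζ : ℂ | t < ‖z - ζ‖⁻¹} ≤ ENNReal.ofReal (Real.pi / t ^ 2) := by
  have hsub : {ζ : ℂ | t < ‖z - ζ‖⁻¹} ⊆ Metric.ball z t⁻¹ := by
    intro ζ hζ
    simp only [mem_setOf_eq] at hζ
    rw [Metric.mem_ball, Complex.dist_eq, norm_sub_rev]
    rw [← inv_inv ‖z - ζ‖]
    exact inv_strictAnti₀ ht hζ
  calc volume {ζ : ℂ | t < ‖z - ζ‖⁻¹} ≤ volume (Metric.ball z t⁻¹) := measure_mono hsub
    _ = ENNReal.ofReal (Real.pi / t ^ 2) := by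
        rw [Complex.volume_ball, ← ENNReal.ofReal_pow (by positivity), ← NNReal.coe_real_pi,
          ENNReal.ofReal_coe_nnreal.symm, ← ENNReal.ofReal_mul (by positivity)]
        congr 1
        field_simp

open Set in
lemma AB_tail_bound {A c : ℝ} (hA : 0 < A) (hc : 0 < c) :
    ∫⁻ t in Set.Ioi (0:ℝ), min (ENNReal.ofReal A) (ENNReal.ofReal (c / t ^ 2)) ≤
      ENNReal.ofReal (2 * Real.sqrt (c * A)) := by
  set t₀ : ℝ := Real.sqrt (c / A) with ht₀def
  have ht₀ : 0 < t₀ := Real.sqrt_pos.mpr (by positivity)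
  have hsplit : Set.Ioi (0:ℝ) = Set.Ioc 0 t₀ ∪ Set.Ioi t₀ := (Set.Ioc_union_Ioi_eq_Ioi ht₀.le).symm
  rw [hsplit, lintegral_union measurableSet_Ioi (Set.Ioc_disjoint_Ioi le_rfl)]
  have h1 : ∫⁻ t in Set.Ioc (0:ℝ) t₀, min (ENNReal.ofReal A) (ENNReal.ofReal (c / t ^ 2)) ≤
      ENNReal.ofReal (Real.sqrt (c * A)) := by
    calc ∫⁻ t in Set.Ioc (0:ℝ) t₀, min (ENNReal.ofReal A) (ENNReal.ofReal (c / t ^ 2))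
        ≤ ∫⁻ _ in Set.Ioc (0:ℝ) t₀, ENNReal.ofReal A := lintegral_mono fun t => min_le_left _ _
      _ = ENNReal.ofReal A * volume (Set.Ioc (0:ℝ) t₀) := by rw [setLIntegral_const]
      _ = ENNReal.ofReal (A * t₀) := by
          rw [Real.volume_Ioc, sub_zero, ← ENNReal.ofReal_mul hA.le]
      _ = ENNReal.ofReal (Real.sqrt (c * A)) := by
          congr 1
          rw [ht₀def, show A * Real.sqrt (c / A) = Real.sqrt (A ^ 2 * (c / A)) by
            rw [Real.sqrt_mul (sq_nonneg A), Real.sqrt_sq hA.le]]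
          congr 1
          field_simp
  have h2 : ∫⁻ t in Set.Ioi t₀, min (ENNReal.ofReal A) (ENNReal.ofReal (c / t ^ 2)) ≤
      ENNReal.ofReal (Real.sqrt (c * A)) := by
    have hint : IntegrableOn (fun t : ℝ => c * t ^ (-2 : ℝ)) (Set.Ioi t₀) := by
      exact (integrableOn_Ioi_rpow_of_lt (by norm_num) ht₀).const_mul c
    calc ∫⁻ t in Set.Ioi t₀, min (ENNReal.ofReal A) (ENNReal.ofReal (c / t ^ 2))
        ≤ ∫⁻ t in Set.Ioi t₀, ENNReal.ofReal (c * t ^ (-2 : ℝ)) := by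
          apply lintegral_mono_ae
          filter_upwards [ae_restrict_mem measurableSet_Ioi] with t htt
          refine le_trans (min_le_right _ _) (le_of_eq ?_)
          congr 1
          rw [Real.rpow_neg (le_of_lt (ht₀.trans htt)), ← Real.rpow_natCast t 2]
          norm_num
          rw [div_eq_mul_inv]
      _ = ENNReal.ofReal (∫ t in Set.Ioi t₀, c * t ^ (-2 : ℝ)) := by
          rw [ofReal_integral_eq_lintegral_ofReal hint]
          filter_upwards [ae_restrict_mem measurableSet_Ioi] with t htt
          have : (0:ℝ) < t := ht₀.trans htt
          positivity
      _ = ENNReal.ofReal (c * t₀⁻¹) := by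
          rw [MeasureTheory.integral_const_mul, integral_Ioi_rpow_of_lt (by norm_num) ht₀]
          norm_num
          rw [Real.rpow_neg_one]
      _ = ENNReal.ofReal (Real.sqrt (c * A)) := by
          congr 1
          rw [ht₀def, show (Real.sqrt (c / A))⁻¹ = Real.sqrt (A / c) by
            rw [← Real.sqrt_inv]; congr 1; field_simp,
            show c * Real.sqrt (A / c) = Real.sqrt (c ^ 2 * (A / c)) by
            rw [Real.sqrt_mul (sq_nonneg c), Real.sqrt_sq hc.le]]
          congr 1
          field_simp
  calc _ ≤ ENNReal.ofReal (Real.sqrt (c * A)) + ENNReal.ofReal (Real.sqrt (c * A)) :=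
        add_le_add h1 h2
    _ = ENNReal.ofReal (2 * Real.sqrt (c * A)) := by
        rw [← ENNReal.ofReal_add (Real.sqrt_nonneg _) (Real.sqrt_nonneg _)]; ring_nf

open Set in
lemma AB_key {K : Set ℂ} (hVt : volume K ≠ ⊤) (hV0 : volume K ≠ 0) {f : ℂ → ℝ} {c : ℝ}
    (hc : 0 < c) (hf : AEMeasurable f (volume.restrict K)) (hnn : 0 ≤ f)
    (hb : ∀ t : ℝ, 0 < t → volume {ζ | t < f ζ} ≤ ENNReal.ofReal (c / t ^ 2)) :
    ∫⁻ ζ in K, ENNReal.ofReal (f ζ) ≤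
      ENNReal.ofReal (2 * Real.sqrt (c * (volume K).toReal)) := by
  rw [lintegral_eq_lintegral_meas_lt _ (Filter.Eventually.of_forall hnn) hf]
  have hA : 0 < (volume K).toReal := ENNReal.toReal_pos hV0 hVt
  calc ∫⁻ t in Ioi 0, volume.restrict K {ζ | t < f ζ}
      ≤ ∫⁻ t in Ioi (0:ℝ), min (ENNReal.ofReal (volume K).toReal) (ENNReal.ofReal (c / t ^ 2)) := by
        apply lintegral_mono_ae
        filter_upwards [ae_restrict_mem measurableSet_Ioi] with t htt
        refine le_min ?_ ((Measure.restrict_apply_le _ _).trans (hb t htt))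
        rw [ENNReal.ofReal_toReal hVt]
        exact (measure_mono (subset_univ _)).trans (le_of_eq (Measure.restrict_apply_univ _))
    _ ≤ _ := AB_tail_bound hA hc

open Set in
/-- The Ahlfors–Beurling estimate: `|(1/π) ∫_K dA(ζ)/(z - ζ)| ≤ √(Area K / π)`. -/
theorem ahlfors_beurling (K : Set ℂ) (hK : IsCompact K) (z : ℂ) :
    ‖(Real.pi : ℂ)⁻¹ * ∫ ζ in K, (z - ζ)⁻¹‖ ≤
      Real.sqrt ((volume K).toReal / Real.pi) := by
  by_cases hV0 : volume K = 0
  · rw [Measure.restrict_eq_zero.mpr hV0, integral_zero_measure, mul_zero, norm_zero]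
    positivity
  have hVt : volume K ≠ ⊤ := hK.measure_lt_top.ne
  set A := (volume K).toReal with hAdef
  have hA : 0 < A := ENNReal.toReal_pos hV0 hVt
  have hπ := Real.pi_pos
  have hmg : Measurable fun ζ : ℂ => (z - ζ)⁻¹ := (measurable_const.sub measurable_id).inv
  -- integrability of the Cauchy kernel on K
  have hint : IntegrableOn (fun ζ : ℂ => (z - ζ)⁻¹) K := by
    refine ⟨hmg.aestronglyMeasurable, ?_⟩
    rw [hasFiniteIntegral_iff_norm]
    have heq : ∀ ζ : ℂ, ENNReal.ofReal ‖(z - ζ)⁻¹‖ = ENNReal.ofReal (‖z - ζ‖⁻¹) := by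
      intro ζ; rw [norm_inv]
    calc ∫⁻ ζ in K, ENNReal.ofReal ‖(z - ζ)⁻¹‖
        = ∫⁻ ζ in K, ENNReal.ofReal (‖z - ζ‖⁻¹) := by simp_rw [heq]
      _ ≤ ENNReal.ofReal (2 * Real.sqrt (Real.pi * A)) := by
          refine AB_key hVt hV0 hπ ?_ (fun ζ => by positivity) (fun t ht => AB_superlevel_norm z ht)
          exact ((measurable_const.sub measurable_id).norm.inv).aemeasurable
      _ < ⊤ := ENNReal.ofReal_lt_top
  set I : ℂ := ∫ ζ in K, (z - ζ)⁻¹ with hIdef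
  by_cases hI : I = 0
  · rw [hI, mul_zero, norm_zero]; positivity
  have habsI : ‖I‖ ≠ 0 := by simpa using hI
  set u : ℂ := (starRingEnd ℂ) I * ((‖I‖ : ℝ) : ℂ)⁻¹ with hudef
  have hu : ‖u‖ = 1 := by
    rw [hudef, norm_mul, Complex.norm_conj, norm_inv, Complex.norm_real, Real.norm_eq_abs,
      abs_of_nonneg (norm_nonneg I), mul_inv_cancel₀ habsI]
  have huI : u * I = ((‖I‖ : ℝ) : ℂ) := by
    have h1 : u * I = (I * (starRingEnd ℂ) I) * (((‖I‖ : ℝ) : ℂ))⁻¹ := by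
      rw [hudef]; ring
    rw [Complex.mul_conj, Complex.normSq_eq_norm_sq] at h1
    rw [h1]
    have : ((‖I‖ : ℝ) : ℂ) ≠ 0 := by simpa using habsI
    field_simp
    norm_cast
  -- the key estimate |I| ≤ √(π A)
  have hle : ‖I‖ ≤ Real.sqrt (Real.pi * A) := by
    have hhm : Measurable fun ζ : ℂ => (u * (z - ζ)⁻¹).re :=
      Complex.measurable_re.comp (measurable_const.mul hmg)
    have hh_int : IntegrableOn (fun ζ : ℂ => (u * (z - ζ)⁻¹).re) K := by
      have := (hint.const_mul u).re
      simpa [IntegrableOn] using this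
    have step1 : ‖I‖ = ∫ ζ in K, (u * (z - ζ)⁻¹).re := by
      have h2 : (∫ ζ in K, u * (z - ζ)⁻¹) = u * I := by
        rw [hIdef, integral_const_mul]
      have h3 := integral_re (hint.const_mul u)
      simp only [RCLike.re_to_complex] at h3
      rw [h3, h2, huI, Complex.ofReal_re]
    have step2 : (∫ ζ in K, (u * (z - ζ)⁻¹).re) ≤
        ∫ ζ in K, max ((u * (z - ζ)⁻¹).re) 0 :=
      integral_mono hh_int hh_int.pos_part (fun ζ => le_max_left _ _)
    have step3 : (∫ ζ in K, max ((u * (z - ζ)⁻¹).re) 0) =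
        (∫⁻ ζ in K, ENNReal.ofReal (max ((u * (z - ζ)⁻¹).re) 0)).toReal :=
      integral_eq_lintegral_of_nonneg_ae (μ := volume.restrict K)
        (f := fun ζ => max ((u * (z - ζ)⁻¹).re) 0)
        (Filter.Eventually.of_forall fun ζ => le_max_right _ _)
        hh_int.pos_part.aestronglyMeasurable
    have step4 : (∫⁻ ζ in K, ENNReal.ofReal (max ((u * (z - ζ)⁻¹).re) 0)) ≤
        ENNReal.ofReal (2 * Real.sqrt (Real.pi / 4 * A)) := by
      refine AB_key hVt hV0 (by positivity) ((hhm.max measurable_const).aemeasurable)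
        (fun ζ => le_max_right _ _) (fun t ht => ?_)
      have hset : {ζ : ℂ | t < max ((u * (z - ζ)⁻¹).re) 0} =
          {ζ : ℂ | t < (u * (z - ζ)⁻¹).re} := by
        ext ζ
        simp only [mem_setOf_eq, lt_max_iff]
        exact or_iff_left ht.not_gt
      rw [hset]
      exact AB_superlevel_re z u hu ht
    have step5 : 2 * Real.sqrt (Real.pi / 4 * A) = Real.sqrt (Real.pi * A) := by
      rw [show (2:ℝ) * Real.sqrt (Real.pi / 4 * A) = Real.sqrt (2 ^ 2 * (Real.pi / 4 * A)) by
        rw [Real.sqrt_mul (by norm_num : (0:ℝ) ≤ 2 ^ 2), Real.sqrt_sq (by norm_num : (0:ℝ) ≤ 2)]]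
      congr 1
      ring
    calc ‖I‖ = ∫ ζ in K, (u * (z - ζ)⁻¹).re := step1
      _ ≤ ∫ ζ in K, max ((u * (z - ζ)⁻¹).re) 0 := step2
      _ = (∫⁻ ζ in K, ENNReal.ofReal (max ((u * (z - ζ)⁻¹).re) 0)).toReal := step3
      _ ≤ 2 * Real.sqrt (Real.pi / 4 * A) :=
          ENNReal.toReal_le_of_le_ofReal (by positivity) step4
      _ = Real.sqrt (Real.pi * A) := step5
  -- conclude
  rw [norm_mul, norm_inv, Complex.norm_real, Real.norm_eq_abs, abs_of_pos hπ]
  have hfin : Real.pi⁻¹ * Real.sqrt (Real.pi * A) = Real.sqrt (A / Real.pi) := by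
    rw [show A / Real.pi = (Real.pi * A) / Real.pi ^ 2 by field_simp,
      Real.sqrt_div (by positivity), Real.sqrt_sq hπ.le, inv_mul_eq_div]
  rw [← hfin]
  exact mul_le_mul_of_nonneg_left hle (by positivity)
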